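/- Let H be a group, m : H → ℝ a homogeneous quasimorphism with defect D, and τ = {g ∈ H : |m(g)| < C} for some C > 2D. If z ∈ H is an element with m(z) ≠ 0, then the map n ↦ z^n is a quasi-isometric embedding of ℤ into (H, d_τ): specifically d_τ(1, z^n) ≥ |n|·|m(z)|/(C + D) for all n, while d_τ(1, z^n) ≤ |n| d_τ(1,z). -/

import Mathlib

/-- The word length of `g` with respect to a generating set `τ` (distance from `1`
to `g` in the Cayley graph `Cay(H, τ)`). -/
noncomputable def wordLength {H : Type*} [Group H] (τ : Set H) (g : H) : ℕ :=
  sInf {n : ℕ | ∃ l : List H, (∀ x ∈ l, x ∈ τ ∨ x⁻¹ ∈ τ) ∧ l.prod = g ∧ l.length = n}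

/-- For a homogeneous quasimorphism `m` with defect `D`, `C > 2D`,
and `τ = {g : |m g| < C}` generating `H`, any `z` with `m(z) ≠ 0` gives a
quasi-isometric embedding `n ↦ z^n` of `ℤ` into `(H, d_τ)`:
`d_τ(1, z^n) ≥ |n|·|m z|/(C + D)` and `d_τ(1, z^n) ≤ |n|·d_τ(1, z)`. -/
theorem zpowers_qi_embedded {H : Type*} [Group H] (m : H → ℝ) (D : ℝ)
    (hD : ∀ h k : H, |m (h * k) - m h - m k| ≤ D)
    (hhom : ∀ (h : H) (n : ℤ), m (h ^ n) = (n : ℝ) * m h)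
    (C : ℝ) (hC : 2 * D < C)
    (hgen : Subgroup.closure {g : H | |m g| < C} = ⊤)
    (z : H) (hz : m z ≠ 0) :
    ∀ n : ℤ,
      (|(n : ℝ)| * |m z|) / (C + D) ≤ (wordLength {g : H | |m g| < C} (z ^ n) : ℝ) ∧
      (wordLength {g : H | |m g| < C} (z ^ n) : ℝ) ≤
        |(n : ℝ)| * (wordLength {g : H | |m g| < C} z : ℝ) := by
  set τ : Set H := {g : H | |m g| < C} with hτ
  have hm1 : m 1 = 0 := by simpa using hhom 1 0
  have hD0 : 0 ≤ D := by simpa [hm1] using hD 1 1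
  have hCD : 0 < C + D := by linarith
  have hinv : ∀ x : H, m x⁻¹ = - m x := by
    intro x; simpa using hhom x (-1)
  -- any product of k letters from τ ∪ τ⁻¹ has |m| ≤ k (C + D)
  have hbound : ∀ l : List H, (∀ x ∈ l, x ∈ τ ∨ x⁻¹ ∈ τ) →
      |m l.prod| ≤ l.length * (C + D) := by
    intro l
    induction l with
    | nil => intro _; simp [hm1]
    | cons x t ih =>
      intro h
      have hx : |m x| < C := by
        rcases h x (List.mem_cons_self) with hx | hx
        · exact hx
        · have := hx
          rw [hτ, Set.mem_setOf_eq, hinv, abs_neg] at this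
          exact this
      have ht := ih (fun y hy => h y (List.mem_cons_of_mem _ hy))
      have hd := hD x t.prod
      have htri : |m (x * t.prod)| ≤ |m (x * t.prod) - m x - m t.prod| + |m x| + |m t.prod| := by
        have := abs_add_le (m (x * t.prod) - m x - m t.prod + m x) (m t.prod)
        have h2 := abs_add_le (m (x * t.prod) - m x - m t.prod) (m x)
        have he : m (x * t.prod) - m x - m t.prod + m x + m t.prod = m (x * t.prod) := by ring
        rw [he] at this
        linarith
      have hprod : (x :: t).prod = x * t.prod := List.prod_cons
      rw [hprod]
      have hlen : ((x :: t).length : ℝ) = (t.length : ℝ) + 1 := by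
        push_cast [List.length_cons]; ring
      rw [hlen]
      nlinarith
  -- every element admits a word
  have hword : ∀ g : H, ∃ l : List H, (∀ x ∈ l, x ∈ τ ∨ x⁻¹ ∈ τ) ∧ l.prod = g := by
    intro g
    have hg : g ∈ Subgroup.closure τ := by rw [hgen]; trivial
    have hg' : g ∈ Submonoid.closure (τ ∪ τ⁻¹) := by
      rw [← Subgroup.closure_toSubmonoid]; exact hg
    obtain ⟨l, hl, hlp⟩ := Submonoid.exists_list_of_mem_closure hg'
    refine ⟨l, fun x hx => ?_, hlp⟩
    rcases hl x hx with h | h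
    · exact Or.inl h
    · exact Or.inr (Set.mem_inv.mp h)
  have hne : ∀ g : H, {n : ℕ | ∃ l : List H,
      (∀ x ∈ l, x ∈ τ ∨ x⁻¹ ∈ τ) ∧ l.prod = g ∧ l.length = n}.Nonempty := by
    intro g
    obtain ⟨l, hl, hlp⟩ := hword g
    exact ⟨l.length, l, hl, hlp, rfl⟩
  intro n
  constructor
  · -- lower bound
    obtain ⟨l, hl, hlp, hll⟩ := Nat.sInf_mem (hne (z ^ n))
    have hll' : l.length = wordLength τ (z ^ n) := hll
    have h1 : |(n : ℝ)| * |m z| = |m (z ^ n)| := by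
      rw [hhom z n, abs_mul]
    have h2 : |m (z ^ n)| ≤ (wordLength τ (z ^ n) : ℝ) * (C + D) := by
      have := hbound l hl
      rw [hlp, hll'] at this
      exact this
    rw [div_le_iff₀ hCD, h1]
    exact h2
  · -- upper bound
    obtain ⟨l, hl, hlp, hll⟩ := Nat.sInf_mem (hne z)
    have hll' : l.length = wordLength τ z := hll
    have absn : |(n : ℝ)| = (n.natAbs : ℝ) := by
      rw [Nat.cast_natAbs, Int.cast_abs]
    -- build a word for z ^ n of length n.natAbs * wordLength z
    have key : wordLength τ (z ^ n) ≤ n.natAbs * wordLength τ z := by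
      rcases le_or_gt 0 n with hn | hn
      · refine Nat.sInf_le ⟨(List.replicate n.natAbs l).flatten, ?_, ?_, ?_⟩
        · intro x hx
          obtain ⟨t, ht, hxt⟩ := List.mem_flatten.mp hx
          exact hl x ((List.eq_of_mem_replicate ht) ▸ hxt)
        · rw [List.prod_flatten]
          have h3 : (List.replicate n.natAbs l).map List.prod
              = List.replicate n.natAbs l.prod := by simp
          rw [h3, List.prod_replicate, hlp]
          rw [← zpow_natCast, Int.natAbs_of_nonneg hn]
        · rw [List.length_flatten]
          simp [List.map_replicate, List.sum_replicate, hll']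
      · refine Nat.sInf_le ⟨(List.replicate n.natAbs ((l.map Inv.inv).reverse)).flatten, ?_, ?_, ?_⟩
        · intro x hx
          obtain ⟨t, ht, hxt⟩ := List.mem_flatten.mp hx
          rw [List.eq_of_mem_replicate ht] at hxt
          rw [List.mem_reverse, List.mem_map] at hxt
          obtain ⟨y, hy, rfl⟩ := hxt
          rcases hl y hy with h | h
          · exact Or.inr (by simpa using h)
          · exact Or.inl h
        · rw [List.prod_flatten]
          have h3 : (List.replicate n.natAbs ((l.map Inv.inv).reverse)).map List.prod
              = List.replicate n.natAbs ((l.map Inv.inv).reverse).prod := by simp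
          rw [h3, List.prod_replicate]
          have hip : ((l.map Inv.inv).reverse).prod = l.prod⁻¹ :=
            (List.prod_inv_reverse l).symm
          rw [hip, hlp]
          have h4 : z ^ n = z⁻¹ ^ n.natAbs := by
            rw [← zpow_natCast z⁻¹, inv_zpow, ← zpow_neg]
            congr 1
            omega
          exact h4.symm
        · rw [List.length_flatten]
          simp [List.map_replicate, List.sum_replicate, hll']
    have : (wordLength τ (z ^ n) : ℝ) ≤ ((n.natAbs * wordLength τ z : ℕ) : ℝ) :=
      Nat.cast_le.mpr key
    rw [absn]
    push_cast at this ⊢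
    exact this
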